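/- There exists an instance of balanced k-center where restricting the cluster centers to be exactly the set S output by Gonzalez's algorithm (one center per selected point, rather than allowing repetitions via the Cartesian product S^k) yields an unboundedly bad approximation ratio: for the 6-point planar instance with p_1 = p_2, p_3 = p_4 at vertical distance l, and p_5, p_6 at vertical distance 2r on a line at horizontal distance h with l < 2r ≪ h, the optimal balanced radius (L = U = 2, k = 3) is r, but using centers {p_1, p_5, p_6} forces some cluster of radius at least h, giving ratio ≥ h/r which is unbounded. -/
import Mathlib


attribute [local instance] Classical.propDecidable


lemma dist_pt (a b c d : ℝ) :
    dist ((WithLp.equiv 2 (Fin 2 → ℝ)).symm ![a, b])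
      ((WithLp.equiv 2 (Fin 2 → ℝ)).symm ![c, d]) = Real.sqrt ((a-c)^2 + (b-d)^2) := by
  rw [EuclideanSpace.dist_eq]
  simp [Fin.sum_univ_two, Real.dist_eq, sq_abs]

lemma sqrt_le_of (x r : ℝ) (h1 : 0 ≤ r) (h2 : x ≤ r^2) : Real.sqrt x ≤ r := by
  calc Real.sqrt x ≤ Real.sqrt (r^2) := Real.sqrt_le_sqrt h2
  _ = r := Real.sqrt_sq h1

lemma le_sqrt_of (x r : ℝ) (h1 : 0 ≤ r) (h2 : r^2 ≤ x) : r ≤ Real.sqrt x := by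
  calc r = Real.sqrt (r^2) := (Real.sqrt_sq h1).symm
  _ ≤ Real.sqrt x := Real.sqrt_le_sqrt h2

/-- the planar instance showing that restricting the centers to be exactly
the Gonzalez set `S = {p 1, p 5, p 6}` (one center per selected point, no repetitions) is
unboundedly bad. Points `p 1 = p 2 = (0, l)`, `p 3 = p 4 = (0, 0)`, `p 5 = (h, 0)`,
`p 6 = (h, 2r)` with `0 < l < 2r < h`, `k = 3`, `L = U = 2`: the optimal balanced radius
is at most `r`, but every balanced clustering using exactly the three centers of `S`
(assigned bijectively to the clusters) has some point at distance at least `h` from its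
center, giving ratio at least `h / r`. -/
theorem stmt14 (l r h : ℝ) (hl : 0 < l) (hlr : l < 2 * r) (hrh : 2 * r < h) :
    let pt : ℝ → ℝ → EuclideanSpace ℝ (Fin 2) :=
      fun x y => (WithLp.equiv 2 (Fin 2 → ℝ)).symm ![x, y]
    let p : Fin 6 → EuclideanSpace ℝ (Fin 2) :=
      ![pt 0 l, pt 0 l, pt 0 0, pt 0 0, pt h 0, pt h (2 * r)]
    let S : Fin 3 → EuclideanSpace ℝ (Fin 2) := ![p 0, p 4, p 5]
    -- the optimum has radius at most r
    (∃ σ : Fin 6 → Fin 3, (∀ m, (Finset.univ.filter fun i => σ i = m).card = 2) ∧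
        ∃ c : Fin 3 → EuclideanSpace ℝ (Fin 2), ∀ i, dist (p i) (c (σ i)) ≤ r) ∧
    -- but with the centers of S used bijectively, some point is at distance ≥ h
    (∀ σ : Fin 6 → Fin 3, (∀ m, (Finset.univ.filter fun i => σ i = m).card = 2) →
        ∀ e : Equiv.Perm (Fin 3), ∃ i, h ≤ dist (p i) (S (e (σ i)))) := by
  intro pt p S
  have hr : 0 < r := by linarith
  have hh : 0 < h := by linarith
  have hb1 : ∀ a b : ℝ, dist (pt a b) (pt a b) ≤ r := by
    intro a b; simp [pt, dist_pt]; positivity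
  have hb2 : ∀ a b : ℝ, dist (pt h a) (pt h b) ≤ |a - b| := by
    intro a b
    simp only [pt, dist_pt]
    rw [show (h - h)^2 + (a - b)^2 = (a-b)^2 by ring, Real.sqrt_sq_eq_abs]
  have hb3 : ∀ a b : ℝ, h ≤ dist (pt 0 a) (pt h b) := by
    intro a b
    simp only [pt, dist_pt]
    apply le_sqrt_of _ _ hh.le
    nlinarith [sq_nonneg (a - b)]
  constructor
  · refine ⟨![0, 0, 1, 1, 2, 2], ?_, ![pt 0 l, pt 0 0, pt h r], ?_⟩
    · intro m
      rw [Finset.filter_congr_decidable]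
      fin_cases m <;> decide
    · intro i
      fin_cases i
      · exact hb1 0 l
      · exact hb1 0 l
      · exact hb1 0 0
      · exact hb1 0 0
      · exact le_trans (hb2 0 r) (by rw [abs_of_nonpos (by linarith)]; linarith)
      · exact le_trans (hb2 (2*r) r) (by rw [abs_of_nonneg (by linarith)]; linarith)
  · intro σ hcard e
    by_contra hc
    push_neg at hc
    have key : ∀ i : Fin 6, i ≠ 4 → i ≠ 5 → σ i = e.symm 0 := by
      intro i hi4 hi5
      by_contra hne
      have hj : e (σ i) ≠ 0 := fun hj0 => hne (by simpa using congrArg e.symm hj0)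
      have hSj : S (e (σ i)) = pt h 0 ∨ S (e (σ i)) = pt h (2 * r) := by
        have := hj
        generalize e (σ i) = j at *
        fin_cases j
        · exact absurd rfl this
        · exact Or.inl rfl
        · exact Or.inr rfl
      have hge : h ≤ dist (p i) (S (e (σ i))) := by
        have hp : p i = pt 0 l ∨ p i = pt 0 0 := by
          fin_cases i
          · exact Or.inl rfl
          · exact Or.inl rfl
          · exact Or.inr rfl
          · exact Or.inr rfl
          · exact absurd rfl hi4
          · exact absurd rfl hi5
        rcases hp with hp | hp <;> rcases hSj with hS | hS <;> rw [hp, hS] <;>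
          exact hb3 _ _
      exact absurd hge (not_le.mpr (hc i))
    have hsub : ({0, 1, 2, 3} : Finset (Fin 6)) ⊆
        Finset.univ.filter fun i => σ i = e.symm 0 := by
      intro i hi
      simp only [Finset.mem_insert, Finset.mem_singleton] at hi
      rw [Finset.mem_filter]
      refine ⟨Finset.mem_univ _, ?_⟩
      rcases hi with rfl | rfl | rfl | rfl <;> exact key _ (by decide) (by decide)
    have h4 : (({0, 1, 2, 3} : Finset (Fin 6))).card = 4 := by decide
    have := Finset.card_le_card hsub
    rw [h4, hcard (e.symm 0)] at this
    omega
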